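/- arXiv:1406.1717 — 7 statements merged into one kernel-verified Lean document; each statement's English description precedes it below -/
import Mathlib

section
/- Let α be a linear order, h a natural number, t a natural number with t ≤ h, and Z a multiset over α with |Z| = h+1. Let M be a multiset over α of cardinality 2h+1 obtained from Z by adding h−t elements each of which is strictly less than every element of Z and t elements each of which is strictly greater than every element of Z. Then the element of rank h of M equals the element of rank t of Z. -/
/-- Let `Z` be a multiset of cardinality `h+1` over a linear order.
Form `M = N + Z + P` where `N` consists of `h - t` elements each strictly smaller than
every element of `Z`, and `P` consists of `t` elements each strictly larger than every
element of `Z` (so `|M| = 2h+1`).  Then the element of rank `h` of `M` (its median)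
equals the element of rank `t` of `Z`. -/
theorem median_of_padded_block {α : Type*} [LinearOrder α] (h t : ℕ) (ht : t ≤ h)
    (Z N P : Multiset α) (hZ : Multiset.card Z = h + 1)
    (hN : Multiset.card N = h - t) (hP : Multiset.card P = t)
    (hNlt : ∀ x ∈ N, ∀ z ∈ Z, x < z) (hPgt : ∀ x ∈ P, ∀ z ∈ Z, z < x) :
    (Multiset.sort (N + Z + P) (· ≤ ·))[h]? = (Multiset.sort Z (· ≤ ·))[t]? := by
  set lN := Multiset.sort N (· ≤ ·) with hlN
  set lZ := Multiset.sort Z (· ≤ ·) with hlZ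
  set lP := Multiset.sort P (· ≤ ·) with hlP
  have key : Multiset.sort (N + Z + P) (· ≤ ·) = lN ++ lZ ++ lP := by
    refine (fun hp h1 h2 => List.Perm.eq_of_pairwise' (r := (· ≤ ·)) h1 h2 hp) ?_ ?_ ?_
    · rw [← Multiset.coe_eq_coe]
      simp [hlN, hlZ, hlP, Multiset.sort_eq, ← Multiset.coe_add, List.append_assoc, add_assoc]
    · exact Multiset.pairwise_sort _ _
    · have sN : lN.Pairwise (· ≤ ·) := Multiset.pairwise_sort _ _
      have sZ : lZ.Pairwise (· ≤ ·) := Multiset.pairwise_sort _ _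
      have sP : lP.Pairwise (· ≤ ·) := Multiset.pairwise_sort _ _
      have sZP : (lZ ++ lP).Pairwise (· ≤ ·) := by
        rw [List.pairwise_append]
        refine ⟨sZ, sP, ?_⟩
        intro z hz p hp
        exact le_of_lt (hPgt p (by rwa [← Multiset.mem_sort (r := (· ≤ ·))]) z
          (by rwa [← Multiset.mem_sort (r := (· ≤ ·))]))
      rw [List.append_assoc, List.pairwise_append]
      refine ⟨sN, sZP, ?_⟩
      intro n hn y hy
      have hnN : n ∈ N := by rwa [← Multiset.mem_sort (r := (· ≤ ·))]
      rcases List.mem_append.1 hy with hy | hy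
      · exact le_of_lt (hNlt n hnN y (by rwa [← Multiset.mem_sort (r := (· ≤ ·))]))
      · have hyP : y ∈ P := by rwa [← Multiset.mem_sort (r := (· ≤ ·))]
        have hzne : Z ≠ 0 := by
          intro h0; rw [h0] at hZ; simp at hZ
        obtain ⟨z, hz⟩ := Multiset.exists_mem_of_ne_zero hzne
        exact le_of_lt ((hNlt n hnN z hz).trans (hPgt y hyP z hz))
  rw [key]
  have hlenN : lN.length = h - t := by simp [hlN, hN]
  have hlenZ : lZ.length = h + 1 := by simp [hlZ, hZ]
  rw [List.append_assoc, List.getElem?_append_right (by omega),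
    List.getElem?_append_left (by omega)]
  congr 1
  omega
end

section
/- Let α be a linear order, h a natural number, and z : Fin (h+1) → α. Define the vector x of length 3h+1 over WithBot (WithTop α) by: x_i = ⊥ for 0 ≤ i < h, x_{h+j} = the coercion of z_j for 0 ≤ j ≤ h, and x_i = ⊤ for 2h < i ≤ 3h. Then the median filter of x with window size 2h+1 is the vector (y_0, …, y_h) where y_t is the coercion of the element of rank t of the multiset {z_0, …, z_h}; in other words, the output of the median filter is exactly the sorted (nondecreasing) rearrangement of the block z. -/
theorem median_aux {α : Type*} [LinearOrder α] (h : ℕ)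
    (z : Fin (h + 1) → α) (f : α → WithBot (WithTop α))
    (hfmono : ∀ a b : α, a ≤ b → f a ≤ f b)
    (t : ℕ) (ht : t ≤ h) :
      (Multiset.sort
          (↑((((List.replicate h (⊥ : WithBot (WithTop α))) ++
                (List.ofFn z).map f ++
                List.replicate h (⊤ : WithBot (WithTop α))).drop t).take (2 * h + 1)) :
            Multiset (WithBot (WithTop α))) (· ≤ ·))[h]? =
      ((Multiset.sort (↑(List.ofFn z) : Multiset α) (· ≤ ·))[t]?).map f := by
  set sz : List α := Multiset.sort (↑(List.ofFn z) : Multiset α) (· ≤ ·) with hsz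
  have hszlen : sz.length = h + 1 := by
    rw [hsz]; simp [Multiset.length_sort]
  have hszperm : sz.Perm (List.ofFn z) := by
    rw [← Multiset.coe_eq_coe, hsz, Multiset.sort_eq]
  have hszsorted : sz.Pairwise (· ≤ ·) := Multiset.pairwise_sort _ _
  -- the window as an explicit list
  have hwin : (((List.replicate h (⊥ : WithBot (WithTop α))) ++
                (List.ofFn z).map f ++
                List.replicate h (⊤ : WithBot (WithTop α))).drop t).take (2 * h + 1) =
      List.replicate (h - t) (⊥ : WithBot (WithTop α)) ++
        (List.ofFn z).map f ++ List.replicate t (⊤ : WithBot (WithTop α)) := by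
    rw [List.append_assoc, List.drop_append,
      List.take_append]
    simp only [List.drop_replicate, List.length_replicate]
    rw [Nat.sub_eq_zero_of_le ht, List.drop_zero, List.take_replicate]
    have h1 : min (2 * h + 1) (h - t) = h - t := by omega
    rw [h1, List.take_append, List.length_map, List.length_ofFn]
    have h2 : 2 * h + 1 - (h - t) - (h + 1) = t := by omega
    have h3 : (List.ofFn z).map f = ((List.ofFn z).map f).take (2 * h + 1 - (h - t)) := by
      rw [List.take_of_length_le]; simp; omega
    rw [h2, ← h3, List.take_replicate]
    have h4 : min t h = t := by omega
    rw [h4, List.append_assoc]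
  rw [hwin]
  set S : List (WithBot (WithTop α)) :=
    List.replicate (h - t) (⊥ : WithBot (WithTop α)) ++
      sz.map f ++ List.replicate t (⊤ : WithBot (WithTop α)) with hS
  have hsortedS : S.Pairwise (· ≤ ·) := by
    rw [hS, List.append_assoc]
    rw [List.pairwise_append]
    refine ⟨List.pairwise_replicate.2 (Or.inr le_rfl), ?_, ?_⟩
    · rw [List.pairwise_append]
      refine ⟨List.Pairwise.map f hfmono hszsorted,
        List.pairwise_replicate.2 (Or.inr le_rfl), ?_⟩
      intro a _ b hb
      rw [List.eq_of_mem_replicate hb]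
      exact le_top
    · intro a ha b _
      rw [List.eq_of_mem_replicate ha]
      exact bot_le
  have hpermS : S.Perm (List.replicate (h - t) (⊥ : WithBot (WithTop α)) ++
        (List.ofFn z).map f ++ List.replicate t (⊤ : WithBot (WithTop α))) :=
    (List.Perm.append_left _ (hszperm.map f)).append_right _
  have hsorteq : Multiset.sort
      (↑(List.replicate (h - t) (⊥ : WithBot (WithTop α)) ++
        (List.ofFn z).map f ++ List.replicate t (⊤ : WithBot (WithTop α))) :
        Multiset (WithBot (WithTop α))) (· ≤ ·) = S := by
    apply List.Perm.eq_of_pairwise' (Multiset.pairwise_sort _ _) hsortedS ?_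
    have p1 : (Multiset.sort
      (↑(List.replicate (h - t) (⊥ : WithBot (WithTop α)) ++
        (List.ofFn z).map f ++ List.replicate t (⊤ : WithBot (WithTop α))) :
        Multiset (WithBot (WithTop α))) (· ≤ ·)).Perm
        (List.replicate (h - t) (⊥ : WithBot (WithTop α)) ++
        (List.ofFn z).map f ++ List.replicate t (⊤ : WithBot (WithTop α))) := by
      rw [← Multiset.coe_eq_coe, Multiset.sort_eq]
    exact p1.trans hpermS.symm
  rw [hsorteq, hS, List.append_assoc]
  rw [List.getElem?_append_right (by simp only [List.length_replicate]; omega)]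
  rw [List.getElem?_append_left (by simp only [List.length_replicate, List.length_map, hszlen]; omega)]
  rw [List.getElem?_map]
  simp only [List.length_replicate]
  have hidx : h - (h - t) = t := by omega
  rw [hidx]

/-- Pad the block `z : Fin (h+1) → α` with `h` copies of `⊥` in front and
`h` copies of `⊤` behind, obtaining a vector `x` of length `3h+1` over `WithBot (WithTop α)`.
Then the median filter of `x` with window size `2h+1` (whose output has entries
`y_t` for `0 ≤ t ≤ h`, `y_t` being the element of rank `h` of the window multiset
`{x_t, …, x_{t+2h}}`) is exactly the sorted rearrangement of the block `z`:
`y_t` is the element of rank `t` of the multiset `{z_0, …, z_h}`. -/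
theorem median_filter_sorts_single_block {α : Type*} [LinearOrder α] (h : ℕ)
    (z : Fin (h + 1) → α) :
    ∀ t : ℕ, t ≤ h →
      (Multiset.sort
          (↑((((List.replicate h (⊥ : WithBot (WithTop α))) ++
                (List.ofFn z).map (fun a => ((↑(↑a : WithTop α) : WithBot (WithTop α)))) ++
                List.replicate h (⊤ : WithBot (WithTop α))).drop t).take (2 * h + 1)) :
            Multiset (WithBot (WithTop α))) (· ≤ ·))[h]? =
      ((Multiset.sort (↑(List.ofFn z) : Multiset α) (· ≤ ·))[t]?).map
        (fun a => ((↑(↑a : WithTop α) : WithBot (WithTop α)))) := by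
  intro t ht
  have H := median_aux h z (fun a => ((↑(↑a : WithTop α) : WithBot (WithTop α))))
    (fun a b hab => by
      show ((↑(↑a : WithTop α) : WithBot (WithTop α)) ≤ (↑(↑b : WithTop α) : WithBot (WithTop α)))
      exact_mod_cast hab) t ht
  simpa only [bind_pure_comp, List.map_eq_map, Option.map_eq_map, List.map_map, Option.map_map, Function.comp_def] using H
end

section
/- Let α be a linear order, k ≥ 1, and a : Fin k → α injective. Let σ be the permutation of Fin k sorting a, i.e. a(σ 0) < a(σ 1) < … < a(σ(k−1)). Identify Fin k with a subset of Fin (k+1), with k serving as a sentinel index, and define prev₀, next₀ : Fin (k+1) → Fin (k+1) by the sorted-list initialization: next₀(k) = σ(0), next₀(σ(i)) = σ(i+1) for i < k−1, next₀(σ(k−1)) = k, prev₀(k) = σ(k−1), prev₀(σ(i+1)) = σ(i) for i < k−1, and prev₀(σ(0)) = k. For an index i < k, the delete step maps a pair (prev, next) to (Function.update prev (next i) (prev i), Function.update next (prev i) (next i)), and the undelete step maps (prev, next) to (Function.update prev (next i) i, Function.update next (prev i) i). Let (prev₁, next₁) be the result of applying delete steps for i = k−1, k−2, …, 0, in this order,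 starting from (prev₀, next₀); and for 0 ≤ t < k let (prev₂, next₂) be the result of then applying undelete steps for i = 0, 1, …, t, in this order, starting from (prev₁, next₁). Then (prev₂, next₂) represents the sorted doubly-linked list of the elements a(0), …, a(t): if i₀, i₁, …, i_t is the enumeration of the index set {0, 1, …, t} with a(i₀) < a(i₁) < … < a(i_t), then next₂(k) = i₀, next₂(i_j) = i_{j+1} for all j < t, next₂(i_t) = k, and symmetrically prev₂(i₀) = k, prev₂(i_{j+1}) = i_j for all j < t, and prev₂(k) = i_t. -/
/-- One delete step of the dancing-links scheme on a doubly-linked list represented by a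
pair `(prev, next)` of pointer functions on `Fin (k+1)`:
`prev[next i] ← prev i` and `next[prev i] ← next i`. -/
def delStep {k : ℕ} (i : Fin (k + 1))
    (pn : (Fin (k + 1) → Fin (k + 1)) × (Fin (k + 1) → Fin (k + 1))) :
    (Fin (k + 1) → Fin (k + 1)) × (Fin (k + 1) → Fin (k + 1)) :=
  (Function.update pn.1 (pn.2 i) (pn.1 i), Function.update pn.2 (pn.1 i) (pn.2 i))

/-- One undelete step of the dancing-links scheme:
`prev[next i] ← i` and `next[prev i] ← i`. -/
def undelStep {k : ℕ} (i : Fin (k + 1))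
    (pn : (Fin (k + 1) → Fin (k + 1)) × (Fin (k + 1) → Fin (k + 1))) :
    (Fin (k + 1) → Fin (k + 1)) × (Fin (k + 1) → Fin (k + 1)) :=
  (Function.update pn.1 (pn.2 i) i, Function.update pn.2 (pn.1 i) i)

namespace DLXAux

def Cyc {k : ℕ} (pn : (Fin (k + 1) → Fin (k + 1)) × (Fin (k + 1) → Fin (k + 1)))
    (n : ℕ) (c : ℕ → Fin (k + 1)) : Prop :=
  ∀ j < n, pn.2 (c j) = c ((j + 1) % n) ∧ pn.1 (c ((j + 1) % n)) = c j

theorem cyc_congr {k : ℕ} {pn : (Fin (k + 1) → Fin (k + 1)) × (Fin (k + 1) → Fin (k + 1))}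
    {n : ℕ} {c1 c2 : ℕ → Fin (k + 1)} (h : ∀ j < n, c1 j = c2 j) (hc : Cyc pn n c1) :
    Cyc pn n c2 := by
  intro j hj
  have h1 := hc j hj
  rw [← h j hj, ← h ((j + 1) % n) (Nat.mod_lt _ (by omega))]
  exact h1

theorem undel_del {k : ℕ} (x : Fin (k + 1))
    (pn : (Fin (k + 1) → Fin (k + 1)) × (Fin (k + 1) → Fin (k + 1)))
    (h1 : pn.1 (pn.2 x) = x) (h2 : pn.2 (pn.1 x) = x) :
    undelStep x (delStep x pn) = pn := by
  have e1 : (delStep x pn).1 x = pn.1 x := by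
    simp only [delStep, Function.update_apply]; split_ifs <;> rfl
  have e2 : (delStep x pn).2 x = pn.2 x := by
    simp only [delStep, Function.update_apply]; split_ifs <;> rfl
  show (Function.update (delStep x pn).1 ((delStep x pn).2 x) x,
      Function.update (delStep x pn).2 ((delStep x pn).1 x) x) = pn
  rw [e1, e2]
  show (Function.update (Function.update pn.1 (pn.2 x) (pn.1 x)) (pn.2 x) x,
      Function.update (Function.update pn.2 (pn.1 x) (pn.2 x)) (pn.1 x) x) = pn
  rw [Function.update_idem, Function.update_idem]
  have g1 : Function.update pn.1 (pn.2 x) x = pn.1 := by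
    funext y
    rw [Function.update_apply]
    split_ifs with h
    · rw [h, h1]
    · rfl
  have g2 : Function.update pn.2 (pn.1 x) x = pn.2 := by
    funext y
    rw [Function.update_apply]
    split_ifs with h
    · rw [h, h2]
    · rfl
  rw [g1, g2]

theorem cyc_consist {k : ℕ} {pn : (Fin (k + 1) → Fin (k + 1)) × (Fin (k + 1) → Fin (k + 1))}
    {n : ℕ} {c : ℕ → Fin (k + 1)} (hc : Cyc pn n c) {p : ℕ} (hp : p < n) :
    pn.1 (pn.2 (c p)) = c p ∧ pn.2 (pn.1 (c p)) = c p := by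
  have e : ((p + n - 1) % n + 1) % n = p := by
    rcases Nat.eq_zero_or_pos p with rfl | hp1
    · have e1 : (0 + n - 1) % n = n - 1 := by
        rw [show 0 + n - 1 = n - 1 by omega]
        exact Nat.mod_eq_of_lt (by omega)
      rw [e1, show n - 1 + 1 = n by omega, Nat.mod_self]
    · have e1 : (p + n - 1) % n = p - 1 := by
        rw [show p + n - 1 = (p - 1) + n by omega, Nat.add_mod_right]
        exact Nat.mod_eq_of_lt (by omega)
      rw [e1, show p - 1 + 1 = p by omega]
      exact Nat.mod_eq_of_lt hp
  constructor
  · rw [(hc p hp).1, (hc p hp).2]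
  · have h := hc ((p + n - 1) % n) (Nat.mod_lt _ (by omega))
    rw [e] at h
    rw [h.2, h.1]


theorem cyc_del {k : ℕ} {pn : (Fin (k + 1) → Fin (k + 1)) × (Fin (k + 1) → Fin (k + 1))}
    {n : ℕ} {c : ℕ → Fin (k + 1)} (hc : Cyc pn n c)
    (hinj : ∀ i < n, ∀ j < n, c i = c j → i = j) {p : ℕ} (h1 : 1 ≤ p) (h2 : p < n) :
    Cyc (delStep (c p) pn) (n - 1) (fun j => if j < p then c j else c (j + 1)) := by
  have hcc : ∀ i1, i1 < n → ∀ i2, i2 < n → i1 ≠ i2 → c i1 ≠ c i2 :=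
    fun i1 g1 i2 g2 hne he => hne (hinj i1 g1 i2 g2 he)
  have hnp : pn.2 (c p) = c ((p + 1) % n) := (hc p h2).1
  have hpp : pn.1 (c p) = c (p - 1) := by
    have h := (hc (p - 1) (by omega)).2
    rw [show p - 1 + 1 = p by omega, Nat.mod_eq_of_lt h2] at h
    exact h
  intro j hj
  simp only [delStep, hnp, hpp]
  obtain ⟨q, hq1, hq2⟩ : ∃ q, (p + 1) % n = q ∧ (q = p + 1 ∧ p + 1 < n ∨ q = 0 ∧ p + 1 = n) := by
    rcases lt_or_eq_of_le (show p + 1 ≤ n by omega) with h | h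
    · exact ⟨p + 1, Nat.mod_eq_of_lt h, Or.inl ⟨rfl, h⟩⟩
    · exact ⟨0, by rw [h, Nat.mod_self], Or.inr ⟨rfl, h⟩⟩
  obtain ⟨i, hi1, hi2⟩ : ∃ i, (j + 1) % (n - 1) = i ∧
      (i = j + 1 ∧ j + 1 < n - 1 ∨ i = 0 ∧ j + 1 = n - 1) := by
    rcases lt_or_eq_of_le (show j + 1 ≤ n - 1 by omega) with h | h
    · exact ⟨j + 1, Nat.mod_eq_of_lt h, Or.inl ⟨rfl, h⟩⟩
    · exact ⟨0, by rw [h, Nat.mod_self], Or.inr ⟨rfl, h⟩⟩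
  rw [hq1, hi1]
  obtain ⟨u, hun, hunep, hju, hucase⟩ : ∃ u, u < n ∧ u ≠ p ∧
      (if j < p then c j else c (j + 1)) = c u ∧ ((j < p ∧ u = j) ∨ (p ≤ j ∧ u = j + 1)) := by
    by_cases h : j < p
    · exact ⟨j, by omega, by omega, if_pos h, Or.inl ⟨h, rfl⟩⟩
    · exact ⟨j + 1, by omega, by omega, if_neg h, Or.inr ⟨by omega, rfl⟩⟩
  rw [hju]
  obtain ⟨w, hwn, hcw, hwcase⟩ : ∃ w, w < n ∧
      (if i < p then c i else c (i + 1)) = c w ∧ ((i < p ∧ w = i) ∨ (p ≤ i ∧ w = i + 1)) := by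
    by_cases h : i < p
    · exact ⟨i, by omega, if_pos h, Or.inl ⟨h, rfl⟩⟩
    · exact ⟨i + 1, by omega, if_neg h, Or.inr ⟨by omega, rfl⟩⟩
  rw [hcw]
  by_cases hjp : j = p - 1
  · have hu : u = p - 1 := by omega
    have hwq : w = q := by omega
    constructor
    · rw [hu, Function.update_self, hwq]
    · rw [hwq, Function.update_self, hu]
  · obtain ⟨r, hr1, hr2⟩ : ∃ r, (u + 1) % n = r ∧ (r = u + 1 ∧ u + 1 < n ∨ r = 0 ∧ u + 1 = n) := by
      rcases lt_or_eq_of_le (show u + 1 ≤ n by omega) with h | h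
      · exact ⟨u + 1, Nat.mod_eq_of_lt h, Or.inl ⟨rfl, h⟩⟩
      · exact ⟨0, by rw [h, Nat.mod_self], Or.inr ⟨rfl, h⟩⟩
    have hwr : w = r := by omega
    have hrq : r ≠ q := by omega
    constructor
    · rw [Function.update_of_ne (hcc u hun (p - 1) (by omega) (by omega))]
      rw [(hc u hun).1, hr1, hwr]
    · rw [Function.update_of_ne (hcc w hwn q (by omega) (by omega))]
      rw [hwr, ← hr1]
      exact (hc u hun).2


theorem enum_image {k m : ℕ} (hm : m ≤ k) {τ : Fin m → Fin k} (hinj : Function.Injective τ)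
    (hb : ∀ j, (τ j : ℕ) < m) :
    Finset.image τ Finset.univ = Finset.image (Fin.castLE hm) Finset.univ := by
  apply Finset.eq_of_subset_of_card_le
  · intro x hx
    obtain ⟨j, -, rfl⟩ := Finset.mem_image.1 hx
    exact Finset.mem_image.2 ⟨⟨(τ j : ℕ), hb j⟩, Finset.mem_univ _, by ext; rfl⟩
  · rw [Finset.card_image_of_injective _ hinj,
      Finset.card_image_of_injective _ (Fin.castLE_injective hm)]

theorem enum_surj {k m : ℕ} (hm : m ≤ k) {τ : Fin m → Fin k} (hinj : Function.Injective τ)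
    (hb : ∀ j, (τ j : ℕ) < m) : ∀ i, i < m → ∃ j, (τ j : ℕ) = i := by
  intro i hi
  have : (Fin.castLE hm ⟨i, hi⟩) ∈ Finset.image τ Finset.univ := by
    rw [enum_image hm hinj hb]
    exact Finset.mem_image.2 ⟨⟨i, hi⟩, Finset.mem_univ _, rfl⟩
  obtain ⟨j, -, hj⟩ := Finset.mem_image.1 this
  exact ⟨j, by rw [hj]; rfl⟩

theorem enum_unique {α : Type*} [LinearOrder α] {k m : ℕ} (hm : m ≤ k) (a : Fin k → α)
    (ha : Function.Injective a) {τ₁ τ₂ : Fin m → Fin k}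
    (h1 : Function.Injective τ₁) (h2 : Function.Injective τ₂)
    (b1 : ∀ j, (τ₁ j : ℕ) < m) (b2 : ∀ j, (τ₂ j : ℕ) < m)
    (m1 : StrictMono fun j => a (τ₁ j)) (m2 : StrictMono fun j => a (τ₂ j)) : τ₁ = τ₂ := by
  have himg : Finset.image τ₁ Finset.univ = Finset.image τ₂ Finset.univ := by
    rw [enum_image hm h1 b1, enum_image hm h2 b2]
  set s : Finset α := Finset.image (fun j => a (τ₁ j)) Finset.univ with hs
  have hcard : s.card = m := by
    rw [hs, Finset.card_image_of_injective _ (show Function.Injective fun j => a (τ₁ j) from fun x y h => h1 (ha h)), Finset.card_univ, Fintype.card_fin]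
  have hf1 : ∀ x, (fun j => a (τ₁ j)) x ∈ s := fun x =>
    Finset.mem_image.2 ⟨x, Finset.mem_univ _, rfl⟩
  have hf2 : ∀ x, (fun j => a (τ₂ j)) x ∈ s := by
    intro x
    have : τ₂ x ∈ Finset.image τ₁ Finset.univ := by
      rw [himg]; exact Finset.mem_image.2 ⟨x, Finset.mem_univ _, rfl⟩
    obtain ⟨j, -, hj⟩ := Finset.mem_image.1 this
    exact Finset.mem_image.2 ⟨j, Finset.mem_univ _, by rw [hj]⟩
  have e1 := Finset.orderEmbOfFin_unique hcard hf1 m1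
  have e2 := Finset.orderEmbOfFin_unique hcard hf2 m2
  funext j
  apply ha
  have := congrFun (e1.trans e2.symm) j
  exact this

theorem enum_exists {α : Type*} [LinearOrder α] {k m : ℕ} (hm : m ≤ k) (a : Fin k → α)
    (ha : Function.Injective a) :
    ∃ τ : Fin m → Fin k, Function.Injective τ ∧ (∀ j, (τ j : ℕ) < m) ∧
      StrictMono fun j => a (τ j) := by
  set f : Fin m → α := fun j => a (Fin.castLE hm j) with hf
  refine ⟨fun j => Fin.castLE hm (Tuple.sort f j), ?_, fun j => (Tuple.sort f j).isLt, ?_⟩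
  · exact (Fin.castLE_injective hm).comp (Tuple.sort f).injective
  · apply Monotone.strictMono_of_injective
    · exact Tuple.monotone_sort f
    · exact (ha.comp (Fin.castLE_injective hm)).comp (Tuple.sort f).injective

def cFun {k m : ℕ} (τ : Fin m → Fin k) : ℕ → Fin (k + 1) :=
  fun j => if h : 1 ≤ j ∧ j - 1 < m then (τ ⟨j - 1, h.2⟩).castSucc else Fin.last k

theorem cFun_zero {k m : ℕ} (τ : Fin m → Fin k) : cFun τ 0 = Fin.last k := by
  simp [cFun]

theorem cFun_succ {k m : ℕ} (τ : Fin m → Fin k) (i : ℕ) (hi : i < m) :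
    cFun τ (i + 1) = (τ ⟨i, hi⟩).castSucc := by
  simp [cFun, hi]

theorem cFun_inj {k m : ℕ} {τ : Fin m → Fin k} (hinj : Function.Injective τ) :
    ∀ i < m + 1, ∀ j < m + 1, cFun τ i = cFun τ j → i = j := by
  have hne : ∀ (x : Fin k), x.castSucc ≠ Fin.last k := fun x => (Fin.castSucc_lt_last x).ne
  intro i hi j hj h
  match i, j with
  | 0, 0 => rfl
  | 0, j + 1 =>
    rw [cFun_zero, cFun_succ τ j (by omega)] at h
    exact absurd h.symm (hne _)
  | i + 1, 0 =>
    rw [cFun_zero, cFun_succ τ i (by omega)] at h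
    exact absurd h (hne _)
  | i + 1, j + 1 =>
    rw [cFun_succ τ i (by omega), cFun_succ τ j (by omega)] at h
    have := hinj (Fin.castSucc_injective _ h)
    have : i = j := congrArg Fin.val this
    omega


def Dstate {k : ℕ} (init : (Fin (k + 1) → Fin (k + 1)) × (Fin (k + 1) → Fin (k + 1)))
    (m : ℕ) : (Fin (k + 1) → Fin (k + 1)) × (Fin (k + 1) → Fin (k + 1)) :=
  (((List.finRange k).drop m).reverse).foldl (fun pn i => delStep i.castSucc pn) init

theorem Dstate_last {k : ℕ} (init : (Fin (k + 1) → Fin (k + 1)) × (Fin (k + 1) → Fin (k + 1))) :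
    Dstate init k = init := by
  have h : (List.finRange k).drop k = [] := by simp
  unfold Dstate
  rw [h]
  rfl

theorem Dstate_step {k : ℕ} (init : (Fin (k + 1) → Fin (k + 1)) × (Fin (k + 1) → Fin (k + 1)))
    {m : ℕ} (hm : m < k) :
    Dstate init m = delStep ((⟨m, hm⟩ : Fin k).castSucc) (Dstate init (m + 1)) := by
  unfold Dstate
  rw [List.drop_eq_getElem_cons (by simpa using hm), List.reverse_cons, List.foldl_append]
  simp

theorem Dstate_zero {k : ℕ} (init : (Fin (k + 1) → Fin (k + 1)) × (Fin (k + 1) → Fin (k + 1))) :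
    Dstate init 0 = ((List.finRange k).reverse).foldl (fun pn i => delStep i.castSucc pn) init :=
  rfl

def natToFin (k j : ℕ) : Fin (k + 1) := ⟨min j k, by omega⟩



theorem cyc_init {α : Type*} [LinearOrder α]
    {k : ℕ} (hk : 1 ≤ k) (a : Fin k → α)
    (σ : Equiv.Perm (Fin k))
    (prev₀ next₀ : Fin (k + 1) → Fin (k + 1))
    (hn0 : next₀ (Fin.last k) = (σ ⟨0, hk⟩).castSucc)
    (hn1 : ∀ (i : ℕ) (hi : i + 1 < k),
      next₀ ((σ ⟨i, Nat.lt_of_succ_lt hi⟩).castSucc) = (σ ⟨i + 1, hi⟩).castSucc)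
    (hn2 : next₀ ((σ ⟨k - 1, Nat.sub_lt hk Nat.one_pos⟩).castSucc) = Fin.last k)
    (hp0 : prev₀ (Fin.last k) = (σ ⟨k - 1, Nat.sub_lt hk Nat.one_pos⟩).castSucc)
    (hp1 : ∀ (i : ℕ) (hi : i + 1 < k),
      prev₀ ((σ ⟨i + 1, hi⟩).castSucc) = (σ ⟨i, Nat.lt_of_succ_lt hi⟩).castSucc)
    (hp2 : prev₀ ((σ ⟨0, hk⟩).castSucc) = Fin.last k) :
    Cyc (prev₀, next₀) (k + 1) (cFun (fun i => σ i)) := by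
  intro j hj
  rcases j with _ | i
  · simp only [cFun_zero, show (0 + 1) % (k + 1) = 1 from Nat.mod_eq_of_lt (by omega),
      cFun_succ (fun i => σ i) 0 (by omega)]
    exact ⟨hn0, hp2⟩
  · simp only [cFun_succ (fun i => σ i) i (by omega : i < k)]
    by_cases hik : i + 1 < k
    · simp only [show (i + 1 + 1) % (k + 1) = i + 2 from Nat.mod_eq_of_lt (by omega),
        cFun_succ (fun i => σ i) (i + 1) (by omega : i + 1 < k)]
      exact ⟨hn1 i hik, hp1 i hik⟩
    · have hie : i = k - 1 := by omega
      subst hie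
      simp only [show (k - 1 + 1 + 1) % (k + 1) = 0 by
        rw [show k - 1 + 1 + 1 = k + 1 by omega]; exact Nat.mod_self _, cFun_zero]
      exact ⟨hn2, hp0⟩

end DLXAux


set_option maxHeartbeats 1000000
open DLXAux

/-- Let `a : Fin k → α` be injective (`k ≥ 1`) and let `σ` be the
permutation sorting `a`, i.e. `a (σ 0) < a (σ 1) < ⋯ < a (σ (k-1))`.  Initialise
`(prev₀, next₀)` on the index set `Fin (k+1)` (with the sentinel `k = Fin.last k`) as the
sorted doubly-linked list of all of `a`.  Let `(prev₁, next₁)` be the result of applying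
delete steps for `i = k-1, k-2, …, 0` (unwinding, so the list becomes empty), and for
`t < k` let `(prev₂, next₂)` be the result of then applying undelete steps for
`i = 0, 1, …, t`.  Then `(prev₂, next₂)` represents the sorted doubly-linked list of the
elements `a 0, …, a t`: if `τ : Fin (t+1) → Fin k` enumerates the index set `{0, …, t}`
in increasing order of `a`-values (`τ` injective, `τ j ≤ t`, `a ∘ τ` strictly monotone),
then `next₂` steps through `k, τ 0, τ 1, …, τ t, k` and `prev₂` steps backwards. -/
theorem unwind_undelete_represents_sorted_prefix {α : Type*} [LinearOrder α]
    (k : ℕ) (hk : 1 ≤ k) (a : Fin k → α) (ha : Function.Injective a)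
    (σ : Equiv.Perm (Fin k)) (hσ : StrictMono fun i => a (σ i))
    (prev₀ next₀ : Fin (k + 1) → Fin (k + 1))
    (hn0 : next₀ (Fin.last k) = (σ ⟨0, hk⟩).castSucc)
    (hn1 : ∀ (i : ℕ) (hi : i + 1 < k),
      next₀ ((σ ⟨i, by omega⟩).castSucc) = (σ ⟨i + 1, hi⟩).castSucc)
    (hn2 : next₀ ((σ ⟨k - 1, by omega⟩).castSucc) = Fin.last k)
    (hp0 : prev₀ (Fin.last k) = (σ ⟨k - 1, by omega⟩).castSucc)
    (hp1 : ∀ (i : ℕ) (hi : i + 1 < k),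
      prev₀ ((σ ⟨i + 1, hi⟩).castSucc) = (σ ⟨i, by omega⟩).castSucc)
    (hp2 : prev₀ ((σ ⟨0, hk⟩).castSucc) = Fin.last k)
    (PN₁ : (Fin (k + 1) → Fin (k + 1)) × (Fin (k + 1) → Fin (k + 1)))
    (hPN₁ : PN₁ = ((List.finRange k).reverse).foldl
      (fun pn i => delStep i.castSucc pn) (prev₀, next₀))
    (t : Fin k)
    (PN₂ : (Fin (k + 1) → Fin (k + 1)) × (Fin (k + 1) → Fin (k + 1)))
    (hPN₂ : PN₂ = (List.finRange ((t : ℕ) + 1)).foldl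
      (fun pn j => undelStep ((Fin.castLE t.isLt j).castSucc) pn) PN₁)
    (τ : Fin ((t : ℕ) + 1) → Fin k)
    (hτinj : Function.Injective τ)
    (hτle : ∀ j, (τ j : ℕ) ≤ (t : ℕ))
    (hτmono : StrictMono fun j => a (τ j)) :
    PN₂.2 (Fin.last k) = (τ ⟨0, by omega⟩).castSucc ∧
    (∀ (j : ℕ) (hj : j + 1 < (t : ℕ) + 1),
      PN₂.2 ((τ ⟨j, by omega⟩).castSucc) = (τ ⟨j + 1, hj⟩).castSucc) ∧
    PN₂.2 ((τ ⟨(t : ℕ), by omega⟩).castSucc) = Fin.last k ∧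
    PN₂.1 ((τ ⟨0, by omega⟩).castSucc) = Fin.last k ∧
    (∀ (j : ℕ) (hj : j + 1 < (t : ℕ) + 1),
      PN₂.1 ((τ ⟨j + 1, hj⟩).castSucc) = (τ ⟨j, by omega⟩).castSucc) ∧
    PN₂.1 (Fin.last k) = (τ ⟨(t : ℕ), by omega⟩).castSucc := by
  classical
  have key : ∀ d m, m + d = k → 1 ≤ m → ∀ τ' : Fin m → Fin k, Function.Injective τ' →
      (∀ j, (τ' j : ℕ) < m) → (StrictMono fun j => a (τ' j)) →
      Cyc (Dstate (prev₀, next₀) m) (m + 1) (cFun τ') := by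
    intro d
    induction d with
    | zero =>
      intro m hmk h1 τ' hinj hb hmono
      have hmk' : m = k := by omega
      subst hmk'
      have hτσ : τ' = fun i => σ i :=
        enum_unique le_rfl a ha hinj σ.injective hb (fun j => (σ j).isLt) hmono hσ
      rw [Dstate_last]
      exact cyc_congr (fun j _ => by rw [hτσ])
        (cyc_init hk a σ prev₀ next₀ hn0 hn1 hn2 hp0 hp1 hp2)
    | succ d ih =>
      intro m hmk h1 τ' hinj hb hmono
      have hm1 : m + 1 ≤ k := by omega
      obtain ⟨τ2, hinj2, hb2, hmono2⟩ := enum_exists (m := m + 1) hm1 a ha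
      have hcyc2 := ih (m + 1) (by omega) (by omega) τ2 hinj2 hb2 hmono2
      obtain ⟨r, hr⟩ := enum_surj hm1 hinj2 hb2 m (by omega)
      have hdel := cyc_del hcyc2 (cFun_inj hinj2) (p := (r : ℕ) + 1) (by omega)
        (by have := r.isLt; omega)
      have hcm : cFun τ2 ((r : ℕ) + 1) = ((⟨m, by omega⟩ : Fin k)).castSucc := by
        simp only [cFun_succ τ2 (r : ℕ) r.isLt]
        exact congrArg Fin.castSucc (Fin.ext hr)
      simp only [hcm, Nat.add_sub_cancel,
        ← Dstate_step (prev₀, next₀) (show m < k by omega)] at hdel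
      have hskip : τ' = fun j : Fin m => τ2 ⟨if (j : ℕ) < (r : ℕ) then (j : ℕ) else (j : ℕ) + 1,
          by have := j.isLt; split <;> omega⟩ := by
        apply enum_unique (show m ≤ k by omega) a ha hinj ?_ hb ?_ hmono ?_
        · intro x y hxy
          have h' := hinj2 hxy
          have h'' : (if (x : ℕ) < (r : ℕ) then (x : ℕ) else (x : ℕ) + 1)
              = (if (y : ℕ) < (r : ℕ) then (y : ℕ) else (y : ℕ) + 1) := congrArg Fin.val h'
          ext
          split at h'' <;> split at h'' <;> omega
        · have hne : ∀ idx : Fin (m + 1), (idx : ℕ) ≠ (r : ℕ) → (τ2 idx : ℕ) < m := by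
            intro idx hne
            have hlt := hb2 idx
            rcases Nat.lt_or_ge (τ2 idx : ℕ) m with h | h
            · exact h
            · exfalso
              have hvm : (τ2 idx : ℕ) = m := by omega
              have heq : τ2 idx = τ2 r := Fin.ext (by rw [hvm, hr])
              exact hne (congrArg Fin.val (hinj2 heq))
          intro j
          exact hne _ (show (if (j : ℕ) < (r : ℕ) then (j : ℕ) else (j : ℕ) + 1) ≠ (r : ℕ) by
            have := j.isLt; split <;> omega)
        · intro x y hxy
          apply hmono2
          rw [Fin.lt_def] at hxy ⊢
          simp only
          split <;> split <;> omega
      refine cyc_congr ?_ hdel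
      intro j hj
      by_cases hjr : j < (r : ℕ) + 1
      · simp only [if_pos hjr]
        rcases j with _ | i
        · simp only [cFun_zero]
        · have him : i < m := by omega
          simp only [cFun_succ τ2 i (by omega : i < m + 1), cFun_succ τ' i him,
            congrFun hskip ⟨i, him⟩]
          refine congrArg Fin.castSucc (congrArg τ2 (Fin.ext ?_))
          show (i : ℕ) = if i < (r : ℕ) then i else i + 1
          rw [if_pos (by omega)]
      · simp only [if_neg hjr]
        rcases j with _ | i
        · omega
        · have him : i < m := by omega
          simp only [cFun_succ τ2 (i + 1) (by omega : i + 1 < m + 1), cFun_succ τ' i him,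
            congrFun hskip ⟨i, him⟩]
          refine congrArg Fin.castSucc (congrArg τ2 (Fin.ext ?_))
          show (i + 1 : ℕ) = if i < (r : ℕ) then i else i + 1
          rw [if_neg (by omega)]
  -- the undelete phase retraces the final deletions
  have hPN1D : PN₁ = Dstate (prev₀, next₀) 0 := by rw [hPN₁]; rfl
  have hfold : ∀ s, s ≤ (t : ℕ) + 1 →
      List.foldl (fun pn x => undelStep x pn) (Dstate (prev₀, next₀) 0)
        ((List.range s).map (natToFin k)) = Dstate (prev₀, next₀) s := by
    intro s
    induction s with
    | zero => intro _; rfl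
    | succ s ih =>
      intro hs
      rw [List.range_succ, List.map_append, List.foldl_append, ih (by omega)]
      simp only [List.map_cons, List.map_nil, List.foldl_cons, List.foldl_nil]
      have hsk : s < k := by have := t.isLt; omega
      have hnf : natToFin k s = ((⟨s, hsk⟩ : Fin k)).castSucc := by
        apply Fin.ext
        show min s k = s
        omega
      rw [hnf, Dstate_step _ hsk]
      obtain ⟨τ2, hinj2, hb2, hmono2⟩ := enum_exists (m := s + 1) (show s + 1 ≤ k by omega) a ha
      have hcyc := key (k - (s + 1)) (s + 1) (by omega) (by omega) τ2 hinj2 hb2 hmono2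
      obtain ⟨r, hr⟩ := enum_surj (show s + 1 ≤ k by omega) hinj2 hb2 s (by omega)
      have hcons := cyc_consist hcyc (p := (r : ℕ) + 1) (by have := r.isLt; omega)
      have hcm : cFun τ2 ((r : ℕ) + 1) = ((⟨s, hsk⟩ : Fin k)).castSucc := by
        simp only [cFun_succ τ2 (r : ℕ) r.isLt]
        exact congrArg Fin.castSucc (Fin.ext hr)
      simp only [hcm] at hcons
      exact undel_del _ _ hcons.1 hcons.2
  have hPN2D : PN₂ = Dstate (prev₀, next₀) ((t : ℕ) + 1) := by
    rw [hPN₂, hPN1D]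
    have h1 : (List.finRange ((t : ℕ) + 1)).foldl
          (fun pn j => undelStep ((Fin.castLE t.isLt j).castSucc) pn) (Dstate (prev₀, next₀) 0)
        = List.foldl (fun pn x => undelStep x pn) (Dstate (prev₀, next₀) 0)
          ((List.finRange ((t : ℕ) + 1)).map
            (fun j : Fin ((t : ℕ) + 1) => (Fin.castLE t.isLt j).castSucc)) :=
      (List.foldl_map (f := fun j : Fin ((t : ℕ) + 1) => (Fin.castLE t.isLt j).castSucc)
        (g := fun pn x => undelStep x pn) (l := List.finRange ((t : ℕ) + 1))
        (init := Dstate (prev₀, next₀) 0)).symm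
    have hmap : (List.finRange ((t : ℕ) + 1)).map
          (fun j : Fin ((t : ℕ) + 1) => (Fin.castLE t.isLt j).castSucc)
        = (List.range ((t : ℕ) + 1)).map (natToFin k) := by
      apply List.ext_getElem
      · simp
      · intro n h1 h2
        simp only [List.getElem_map, List.getElem_finRange, List.getElem_range]
        apply Fin.ext
        have hn : n < (t : ℕ) + 1 := by simpa using h1
        have := t.isLt
        show n = min n k
        omega
    rw [h1, hmap]
    exact hfold ((t : ℕ) + 1) le_rfl
  have hcycτ := key (k - ((t : ℕ) + 1)) ((t : ℕ) + 1) (by have := t.isLt; omega) (by omega)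
    τ hτinj (fun j => by have := hτle j; omega) hτmono
  rw [← hPN2D] at hcycτ
  refine ⟨?_, ?_, ?_, ?_, ?_, ?_⟩
  · have h := (hcycτ 0 (by omega)).1
    simp only [cFun_zero, show (0 + 1) % ((t : ℕ) + 1 + 1) = 1 from Nat.mod_eq_of_lt (by omega),
      cFun_succ τ 0 (by omega : 0 < (t : ℕ) + 1)] at h
    exact h
  · intro j hj
    have h := (hcycτ (j + 1) (by omega)).1
    simp only [show (j + 1 + 1) % ((t : ℕ) + 1 + 1) = j + 1 + 1 from Nat.mod_eq_of_lt (by omega),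
      cFun_succ τ j (by omega : j < (t : ℕ) + 1),
      cFun_succ τ (j + 1) (by omega : j + 1 < (t : ℕ) + 1)] at h
    exact h
  · have h := (hcycτ ((t : ℕ) + 1) (by omega)).1
    simp only [Nat.mod_self, cFun_zero, cFun_succ τ (t : ℕ) (by omega : (t : ℕ) < (t : ℕ) + 1)] at h
    exact h
  · have h := (hcycτ 0 (by omega)).2
    simp only [cFun_zero, show (0 + 1) % ((t : ℕ) + 1 + 1) = 1 from Nat.mod_eq_of_lt (by omega),
      cFun_succ τ 0 (by omega : 0 < (t : ℕ) + 1)] at h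
    exact h
  · intro j hj
    have h := (hcycτ (j + 1) (by omega)).2
    simp only [show (j + 1 + 1) % ((t : ℕ) + 1 + 1) = j + 1 + 1 from Nat.mod_eq_of_lt (by omega),
      cFun_succ τ j (by omega : j < (t : ℕ) + 1),
      cFun_succ τ (j + 1) (by omega : j + 1 < (t : ℕ) + 1)] at h
    exact h
  · have h := (hcycτ ((t : ℕ) + 1) (by omega)).2
    simp only [Nat.mod_self, cFun_zero, cFun_succ τ (t : ℕ) (by omega : (t : ℕ) < (t : ℕ) + 1)] at h
    exact h
end

section
/- Let α be a linear order, h a natural number, and let L_A, L_B be disjoint finsets over α with |L_A| + |L_B| = 2h+1. Suppose S_A ⊆ L_A and S_B ⊆ L_B satisfy S_A ∪ S_B = H_h(L_A ∪ L_B). Then the element of rank h of L_A ∪ L_B (the median of the window) equals the minimum of the two peeks: it is min(min'(L_A \ S_A), min'(L_B \ S_B)), where min'(T) denotes the minimum of T computed in WithTop α (equal to ⊤ if T is empty). -/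
/-- `smallSet m L` is `H_m(L)`: the set of the `m` smallest elements of the finset `L`
(the first `m` entries of the increasing enumeration of `L`). -/
def smallSet {α : Type*} [LinearOrder α] (m : ℕ) (L : Finset α) : Finset α :=
  ((L.sort (· ≤ ·)).take m).toFinset

/-- Let `L_A, L_B` be disjoint finsets with `|L_A| + |L_B| = 2h+1`, and let
`S_A ⊆ L_A`, `S_B ⊆ L_B` with `S_A ∪ S_B = H_h(L_A ∪ L_B)`.  Then the element of rank `h`
of `L_A ∪ L_B` (the median of the window) equals the minimum of the two peeks
`min'(L_A \ S_A)` and `min'(L_B \ S_B)`, where `min'` is the minimum computed in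
`WithTop α` (`⊤` for the empty set). -/
theorem median_eq_min_of_peeks {α : Type*} [LinearOrder α] (h : ℕ)
    (LA LB SA SB : Finset α) (hdisj : Disjoint LA LB)
    (hcard : LA.card + LB.card = 2 * h + 1)
    (hSA : SA ⊆ LA) (hSB : SB ⊆ LB)
    (hinv : SA ∪ SB = smallSet h (LA ∪ LB)) :
    (((LA ∪ LB).sort (· ≤ ·))[h]'(by
        rw [Finset.length_sort, Finset.card_union_of_disjoint hdisj]; omega) : WithTop α) =
      min (LA \ SA).min (LB \ SB).min := by
  set L := LA ∪ LB with hL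
  set l := L.sort (· ≤ ·) with hl
  have hlen : l.length = 2 * h + 1 := by
    rw [hl, Finset.length_sort, hL, Finset.card_union_of_disjoint hdisj]; omega
  have hh : h < l.length := by omega
  have hmeml : ∀ x, x ∈ l ↔ x ∈ L := fun x => Finset.mem_sort _
  have hnd : l.Nodup := Finset.sort_nodup _ _
  have hsorted : l.Pairwise (· ≤ ·) := Finset.pairwise_sort _ _
  -- union of the differences
  have hUnion : (LA \ SA) ∪ (LB \ SB) = L \ (SA ∪ SB) := by
    ext x
    simp only [Finset.mem_union, Finset.mem_sdiff, hL]
    constructor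
    · rintro (⟨hx, hs⟩ | ⟨hx, hs⟩)
      · exact ⟨Or.inl hx, fun hc => hc.elim hs
          (fun hb => Finset.disjoint_left.mp hdisj hx (hSB hb))⟩
      · exact ⟨Or.inr hx, fun hc => hc.elim
          (fun ha => Finset.disjoint_left.mp hdisj (hSA ha) hx) hs⟩
    · rintro ⟨hx | hx, hs⟩
      · exact Or.inl ⟨hx, fun hc => hs (Or.inl hc)⟩
      · exact Or.inr ⟨hx, fun hc => hs (Or.inr hc)⟩
  rw [← Finset.min_union, hUnion, hinv]
  -- L \ smallSet h L = (l.drop h).toFinset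
  have hdropF : L \ smallSet h L = (l.drop h).toFinset := by
    ext x
    simp only [Finset.mem_sdiff, smallSet, List.mem_toFinset, ← hl, ← hmeml]
    constructor
    · rintro ⟨hx, hnt⟩
      have hx' : x ∈ l.take h ++ l.drop h := by rw [List.take_append_drop]; exact hx
      rcases List.mem_append.mp hx' with hk | hk
      · exact absurd hk hnt
      · exact hk
    · intro hx
      refine ⟨by rw [← List.take_append_drop h l]; exact List.mem_append.mpr (Or.inr hx), ?_⟩
      intro ht
      have := List.disjoint_take_drop (l := l) hnd (le_refl h)
      exact this ht hx
  rw [hdropF]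
  -- min of (l.drop h) is l[h]
  have hhead : l.drop h = l[h] :: l.drop (h + 1) := List.drop_eq_getElem_cons hh
  apply le_antisymm
  · apply Finset.le_min
    intro a ha
    rw [List.mem_toFinset, hhead] at ha
    rcases List.mem_cons.mp ha with rfl | ha
    · exact le_rfl
    · have : l[h] ≤ a := by
        obtain ⟨i, hi, rfl⟩ := List.getElem_of_mem ha
        rw [List.getElem_drop]
        exact hsorted.rel_get_of_le (by simp; omega)
      exact_mod_cast this
  · apply Finset.min_le
    rw [List.mem_toFinset, hhead]
    exact List.mem_cons_self
end

section
/- Assume the invariant setting, and assume additionally that H_h(L_A ∪ L_B) ⊆ L_B (i.e. S_A = ∅ and S_B = H_h(L_A ∪ L_B)). Then the h smallest elements of the new window do not depend on the A side: H_h(L') = H_h(L_B ∪ {a_B}). -/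

lemma sorted_take_mem_iff {α : Type*} [LinearOrder α] :
    ∀ (l : List α), l.Pairwise (· < ·) → ∀ (m : ℕ) (x : α),
      (x ∈ l.take m ↔ x ∈ l ∧ (l.filter (fun y => y ≤ x)).length ≤ m) := by
  intro l hl
  induction l with
  | nil => simp
  | cons a t ih =>
    have hat : ∀ y ∈ t, a < y := (List.pairwise_cons.mp hl).1
    have ht := ih (List.pairwise_cons.mp hl).2
    intro m x
    cases m with
    | zero =>
      simp only [List.take_zero, List.not_mem_nil, false_iff, not_and, not_le,
        Nat.pos_iff_ne_zero]
      intro hx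
      have ha : a ≤ x := by
        rcases List.mem_cons.mp hx with rfl | hx'
        · exact le_refl _
        · exact (hat x hx').le
      have hmem : a ∈ (a :: t).filter (fun y => y ≤ x) :=
        List.mem_filter.mpr ⟨List.mem_cons_self, decide_eq_true ha⟩
      exact (List.length_pos_iff.mpr (List.ne_nil_of_mem hmem)).ne'
    | succ n =>
      rw [List.take_cons (Nat.succ_pos n)]
      simp only [Nat.succ_sub_one]
      by_cases hx : x ∈ a :: t
      · rcases List.mem_cons.mp hx with rfl | hx'
        · have hft : t.filter (fun y => y ≤ x) = [] := by
            rw [List.filter_eq_nil_iff]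
            intro y hy
            simp only [decide_eq_true_eq, not_le]
            exact hat y hy
          rw [List.filter_cons_of_pos (by simp), hft]
          simp
        · have hax : a < x := hat x hx'
          have hxa : x ≠ a := hax.ne'
          rw [List.filter_cons_of_pos (by simp [hax.le])]
          simp only [List.mem_cons, hxa, false_or, List.length_cons,
            Nat.add_le_add_iff_right]
          rw [ht n x]
      · constructor
        · intro hmem
          rcases List.mem_cons.mp hmem with rfl | hm
          · exact absurd (List.mem_cons_self) hx
          · exact absurd (List.mem_cons_of_mem a (List.mem_of_mem_take hm)) hx
        · intro ⟨h1, _⟩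
          exact absurd h1 hx

lemma mem_smallSet {α : Type*} [LinearOrder α] {m : ℕ} {L : Finset α} {x : α} :
    x ∈ smallSet m L ↔ x ∈ L ∧ (L.filter (· ≤ x)).card ≤ m := by
  unfold smallSet
  rw [List.mem_toFinset, sorted_take_mem_iff _ (L.sortedLT_sort.pairwise) m x, Finset.mem_sort]
  have hlen : ((L.sort (· ≤ ·)).filter (fun y => y ≤ x)).length
      = (L.filter (· ≤ x)).card := by
    rw [← Multiset.coe_card, ← Multiset.filter_coe, Finset.sort_eq]
    rfl
  rw [hlen]

lemma smallSet_card {α : Type*} [LinearOrder α] (m : ℕ) (L : Finset α) :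
    (smallSet m L).card = min m L.card := by
  unfold smallSet
  rw [List.toFinset_card_of_nodup ((L.sort_nodup (· ≤ ·)).sublist (List.take_sublist _ _)),
    List.length_take, Finset.length_sort]
/-- Invariant setting: `L_A, L_B` disjoint with `|L_A| + |L_B| = 2h+1`,
`S_A ⊆ L_A`, `S_B ⊆ L_B`, `S_A ∪ S_B = H_h(L_A ∪ L_B)`, `a_A ∈ L_A`, `a_B ∉ L_A ∪ L_B`.
Assume additionally `H_h(L_A ∪ L_B) ⊆ L_B` (i.e. `S_A = ∅` and `S_B = H_h(L_A ∪ L_B)`).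
Then the `h` smallest elements of the new window `L' = (L_A \ {a_A}) ∪ L_B ∪ {a_B}` do not
depend on the `A` side: `H_h(L') = H_h(L_B ∪ {a_B})`. -/
theorem small_half_independent_of_A {α : Type*} [LinearOrder α] (h : ℕ)
    (LA LB SA SB : Finset α) (hdisj : Disjoint LA LB)
    (hcard : LA.card + LB.card = 2 * h + 1)
    (hSA : SA ⊆ LA) (hSB : SB ⊆ LB)
    (hinv : SA ∪ SB = smallSet h (LA ∪ LB))
    (aA aB : α) (haA : aA ∈ LA) (haB : aB ∉ LA ∪ LB)
    (hHB : smallSet h (LA ∪ LB) ⊆ LB) :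
    smallSet h ((LA \ {aA}) ∪ LB ∪ {aB}) = smallSet h (LB ∪ {aB}) := by
  classical
  set U := LA ∪ LB with hU
  set H := smallSet h U with hHdef
  set B' := LB ∪ ({aB} : Finset α) with hB'
  set L' := (LA \ {aA}) ∪ LB ∪ ({aB} : Finset α) with hL'
  have hUcard : U.card = 2 * h + 1 := by
    rw [hU, Finset.card_union_of_disjoint hdisj, hcard]
  have hHcard : H.card = h := by
    rw [hHdef, smallSet_card, hUcard]; omega
  have factA : ∀ z ∈ LA, ∀ w ∈ H, w < z := by
    intro z hz w hw
    obtain ⟨hwU, hwc⟩ := mem_smallSet.mp hw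
    by_contra hlt
    push_neg at hlt
    have hzU : z ∈ U := Finset.mem_union_left _ hz
    have hzH : z ∉ H := fun hzH => Finset.disjoint_left.mp hdisj hz (hHB hzH)
    have hzc : ¬ (U.filter (· ≤ z)).card ≤ h :=
      fun hc => hzH (mem_smallSet.mpr ⟨hzU, hc⟩)
    exact hzc (le_trans (Finset.card_le_card
      (Finset.monotone_filter_right U (fun y _ hy => le_trans hy hlt))) hwc)
  have hBsub : B' ⊆ L' := by
    intro y hy
    rcases Finset.mem_union.mp hy with h1 | h1
    · exact Finset.mem_union_left _ (Finset.mem_union_right _ h1)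
    · exact Finset.mem_union_right _ h1
  have hHL' : H ⊆ L' := fun w hw =>
    Finset.mem_union_left _ (Finset.mem_union_right _ (hHB hw))
  ext x
  rw [mem_smallSet, mem_smallSet]
  constructor
  · rintro ⟨hxL, hxc⟩
    have hxB : x ∈ B' := by
      by_contra hxB
      have hxA : x ∈ LA := by
        rcases Finset.mem_union.mp hxL with h1 | h1
        · rcases Finset.mem_union.mp h1 with h2 | h2
          · exact (Finset.mem_sdiff.mp h2).1
          · exact absurd (Finset.mem_union_left _ h2) hxB
        · exact absurd (Finset.mem_union_right _ h1) hxB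
      have hxH : x ∉ H := fun hh => Finset.disjoint_left.mp hdisj hxA (hHB hh)
      have hsub : insert x H ⊆ L'.filter (· ≤ x) := by
        intro w hw
        rcases Finset.mem_insert.mp hw with rfl | hwH
        · exact Finset.mem_filter.mpr ⟨hxL, le_refl _⟩
        · exact Finset.mem_filter.mpr ⟨hHL' hwH, (factA x hxA w hwH).le⟩
      have hc := Finset.card_le_card hsub
      rw [Finset.card_insert_of_notMem hxH, hHcard] at hc
      omega
    exact ⟨hxB, le_trans (Finset.card_le_card
      (Finset.filter_subset_filter _ hBsub)) hxc⟩
  · rintro ⟨hxB, hxc⟩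
    have hnoA : ∀ y ∈ LA \ ({aA} : Finset α), ¬ y ≤ x := by
      intro y hy hyx
      have hyA : y ∈ LA := (Finset.mem_sdiff.mp hy).1
      have hne : y ≠ x := by
        rintro rfl
        rcases Finset.mem_union.mp hxB with hx | hx
        · exact Finset.disjoint_left.mp hdisj hyA hx
        · rw [Finset.mem_singleton] at hx
          exact haB (Finset.mem_union_left _ (hx ▸ hyA))
      have hyx' : y < x := lt_of_le_of_ne hyx hne
      have hxH : x ∉ H := fun hh => lt_asymm hyx' (factA y hyA x hh)
      have hsub : insert x H ⊆ B'.filter (· ≤ x) := by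
        intro w hw
        rcases Finset.mem_insert.mp hw with rfl | hwH
        · exact Finset.mem_filter.mpr ⟨hxB, le_refl _⟩
        · exact Finset.mem_filter.mpr ⟨Finset.mem_union_left _ (hHB hwH),
            ((factA y hyA w hwH).trans hyx').le⟩
      have hc := Finset.card_le_card hsub
      rw [Finset.card_insert_of_notMem hxH, hHcard] at hc
      omega
    have hfeq : L'.filter (· ≤ x) = B'.filter (· ≤ x) := by
      apply Finset.Subset.antisymm
      · intro w hw
        obtain ⟨hwL, hwx⟩ := Finset.mem_filter.mp hw
        rcases Finset.mem_union.mp hwL with h1 | h1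
        · rcases Finset.mem_union.mp h1 with h2 | h2
          · exact absurd hwx (hnoA w h2)
          · exact Finset.mem_filter.mpr ⟨Finset.mem_union_left _ h2, hwx⟩
        · exact Finset.mem_filter.mpr ⟨Finset.mem_union_right _ h1, hwx⟩
      · exact Finset.filter_subset_filter _ hBsub
    exact ⟨hBsub hxB, hfeq ▸ hxc⟩
end

section
/- Assume the invariant setting with S_A ≠ ∅ and S_B ≠ ∅, and write p_A = max S_A and p_B = max S_B. Assume a_A < p_A and a_B < p_B (case 1 of the case analysis). Then: S'_A = S_A \ {a_A}; S'_B = (S_B \ {p_B}) ∪ {a_B}; p_B is the B-side peek, i.e. p_B = min((L_B ∪ {a_B}) \ S'_B), and p_B is less than every element of (L_A \ {a_A}) \ S'_A; and H_h(L') = (H_h(L_A ∪ L_B) \ {a_A}) ∪ {a_B} = S'_A ∪ S'_B ∪ {p_B}. -/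
section helpers

variable {α : Type*} [LinearOrder α]

theorem smallSet_subset {m : ℕ} {L : Finset α} : smallSet m L ⊆ L := by
  intro x hx
  have := List.mem_toFinset.mp hx
  exact (Finset.mem_sort _).mp ((List.take_sublist _ _).mem this)

theorem card_smallSet {m : ℕ} {L : Finset α} (hm : m ≤ L.card) :
    (smallSet m L).card = m := by
  rw [smallSet, List.card_toFinset,
    ((List.take_sublist _ _).nodup (Finset.sort_nodup _ _)).dedup,
    List.length_take, Finset.length_sort]
  omega

theorem lt_of_smallSet {m : ℕ} {L : Finset α} {x y : α}
    (hx : x ∈ smallSet m L) (hy : y ∈ L) (hy' : y ∉ smallSet m L) : x < y := by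
  have hs : List.Pairwise (· < ·) (L.sort (· ≤ ·)) := (Finset.sortedLT_sort L).pairwise
  have hsplit : L.sort (· ≤ ·) = (L.sort (· ≤ ·)).take m ++ (L.sort (· ≤ ·)).drop m :=
    (List.take_append_drop _ _).symm
  rw [hsplit] at hs
  have hx' : x ∈ (L.sort (· ≤ ·)).take m := List.mem_toFinset.mp hx
  have hy'' : y ∈ (L.sort (· ≤ ·)).drop m := by
    have : y ∈ (L.sort (· ≤ ·)).take m ++ (L.sort (· ≤ ·)).drop m := by
      rw [← hsplit]; exact (Finset.mem_sort _).mpr hy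
    rcases List.mem_append.mp this with h | h
    · exact absurd (List.mem_toFinset.mpr h) hy'
    · exact h
  exact ((List.pairwise_append.mp hs).2.2) x hx' y hy''

theorem smallSet_eq_of {m : ℕ} {L S : Finset α} (hsub : S ⊆ L) (hcard : S.card = m)
    (hlt : ∀ x ∈ S, ∀ y ∈ L \ S, x < y) : smallSet m L = S := by
  classical
  haveI : IsAntisymm α (· ≤ ·) := ⟨fun _ _ => le_antisymm⟩
  have hperm : (L.sort (· ≤ ·)) = S.sort (· ≤ ·) ++ (L \ S).sort (· ≤ ·) := by
    refine (fun hp h1 h2 => List.Perm.eq_of_pairwise' (r := (· ≤ ·)) h1 h2 hp) ?_ ?_ ?_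
    · rw [← Multiset.coe_eq_coe, ← Multiset.coe_add, Finset.sort_eq, Finset.sort_eq,
        Finset.sort_eq, Finset.sdiff_val, add_tsub_cancel_of_le (Finset.val_le_iff.mpr hsub)]
    · exact Finset.pairwise_sort _ _
    · refine List.pairwise_append.mpr ⟨Finset.pairwise_sort _ _, Finset.pairwise_sort _ _,
        fun x hx y hy => ?_⟩
      exact (hlt x ((Finset.mem_sort _).mp hx) y ((Finset.mem_sort _).mp hy)).le
  rw [smallSet, hperm, ← hcard, ← Finset.length_sort (α := α) (· ≤ ·) (s := S),
    List.take_left, Finset.sort_toFinset]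

end helpers

/-- case 1 of the case analysis.  Invariant setting: `L_A, L_B` disjoint
with `|L_A| + |L_B| = 2h+1`, `S_A ⊆ L_A`, `S_B ⊆ L_B`, `S_A ∪ S_B = H_h(L_A ∪ L_B)`,
`a_A ∈ L_A`, `a_B ∉ L_A ∪ L_B`; `L' = (L_A \ {a_A}) ∪ L_B ∪ {a_B}`; updated small sets
`S'_A = H_{|S_A|-1}(L_A \ {a_A})` and `S'_B = H_{|S_B|}(L_B ∪ {a_B})`.
Assume `S_A ≠ ∅`, `S_B ≠ ∅`, `a_A < p_A = max S_A` and `a_B < p_B = max S_B`.  Then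
`S'_A = S_A \ {a_A}`, `S'_B = (S_B \ {p_B}) ∪ {a_B}`, `p_B` is the B-side peek
(`p_B = min((L_B ∪ {a_B}) \ S'_B)`) and is less than every element of
`(L_A \ {a_A}) \ S'_A`, and `H_h(L') = (H_h(L_A ∪ L_B) \ {a_A}) ∪ {a_B} = S'_A ∪ S'_B ∪ {p_B}`. -/
theorem invariant_case1 {α : Type*} [LinearOrder α] (h : ℕ)
    (LA LB SA SB : Finset α) (hdisj : Disjoint LA LB)
    (hcard : LA.card + LB.card = 2 * h + 1)
    (hSA : SA ⊆ LA) (hSB : SB ⊆ LB)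
    (hinv : SA ∪ SB = smallSet h (LA ∪ LB))
    (aA aB : α) (haA : aA ∈ LA) (haB : aB ∉ LA ∪ LB)
    (hSAne : SA.Nonempty) (hSBne : SB.Nonempty)
    (h1 : aA < SA.max' hSAne) (h2 : aB < SB.max' hSBne) :
    smallSet (SA.card - 1) (LA \ {aA}) = SA \ {aA} ∧
    smallSet SB.card (LB ∪ {aB}) = (SB \ {SB.max' hSBne}) ∪ {aB} ∧
    ((LB ∪ {aB}) \ smallSet SB.card (LB ∪ {aB})).min = (SB.max' hSBne : WithTop α) ∧
    (∀ x ∈ (LA \ {aA}) \ smallSet (SA.card - 1) (LA \ {aA}), SB.max' hSBne < x) ∧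
    smallSet h ((LA \ {aA}) ∪ LB ∪ {aB}) = (smallSet h (LA ∪ LB) \ {aA}) ∪ {aB} ∧
    smallSet h ((LA \ {aA}) ∪ LB ∪ {aB}) =
      smallSet (SA.card - 1) (LA \ {aA}) ∪ smallSet SB.card (LB ∪ {aB}) ∪
        {SB.max' hSBne} := by
  classical
  set pB := SB.max' hSBne with hpBdef
  have hpB_SB : pB ∈ SB := SB.max'_mem hSBne
  have cardLU : (LA ∪ LB).card = 2 * h + 1 := by
    rw [Finset.card_union_of_disjoint hdisj]; exact hcard
  have hTsub : SA ∪ SB ⊆ LA ∪ LB := Finset.union_subset_union hSA hSB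
  have hTcard : (SA ∪ SB).card = h := by
    rw [hinv]; exact card_smallSet (by omega)
  have key : ∀ x ∈ SA ∪ SB, ∀ y ∈ LA ∪ LB, y ∉ SA ∪ SB → x < y := by
    intro x hx y hy hy'
    rw [hinv] at hx hy'
    exact lt_of_smallSet hx hy hy'
  have haB_LA : aB ∉ LA := fun hc => haB (Finset.mem_union_left _ hc)
  have haB_LB : aB ∉ LB := fun hc => haB (Finset.mem_union_right _ hc)
  have haB_SB : aB ∉ SB := fun hc => haB_LB (hSB hc)
  have haB_SA : aB ∉ SA := fun hc => haB_LA (hSA hc)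
  have haA_LB : aA ∉ LB := Finset.disjoint_left.mp hdisj haA
  have haA_SB : aA ∉ SB := fun hc => haA_LB (hSB hc)
  have haA_SA : aA ∈ SA := by
    by_contra hc
    have haA_T : aA ∉ SA ∪ SB := by
      intro hm
      rcases Finset.mem_union.mp hm with hm | hm
      · exact hc hm
      · exact haA_SB hm
    have := key (SA.max' hSAne) (Finset.mem_union_left _ (SA.max'_mem hSAne))
      aA (Finset.mem_union_left _ haA) haA_T
    exact absurd h1 (not_lt.mpr this.le)
  have hpB_ne_aA : pB ≠ aA := fun hc => haA_SB (hc ▸ hpB_SB)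
  have hpB_ne_aB : pB ≠ aB := fun hc => haB_SB (hc ▸ hpB_SB)
  have hpB_T : pB ∈ SA ∪ SB := Finset.mem_union_right _ hpB_SB
  -- Claim 1
  have c1 : smallSet (SA.card - 1) (LA \ {aA}) = SA \ {aA} := by
    apply smallSet_eq_of
    · exact Finset.sdiff_subset_sdiff hSA (le_refl _)
    · rw [Finset.sdiff_singleton_eq_erase, Finset.card_erase_of_mem haA_SA]
    · intro x hx y hy
      simp only [Finset.mem_sdiff, Finset.mem_singleton] at hx hy
      refine key x (Finset.mem_union_left _ hx.1) y (Finset.mem_union_left _ hy.1.1) ?_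
      intro hm
      rcases Finset.mem_union.mp hm with hm | hm
      · exact hy.2 ⟨hm, hy.1.2⟩
      · exact Finset.disjoint_left.mp hdisj hy.1.1 (hSB hm)
  -- Claim 2
  have c2 : smallSet SB.card (LB ∪ {aB}) = (SB \ {pB}) ∪ {aB} := by
    apply smallSet_eq_of
    · intro z hz
      simp only [Finset.mem_union, Finset.mem_sdiff, Finset.mem_singleton] at hz ⊢
      rcases hz with ⟨hz, _⟩ | rfl
      · exact Or.inl (hSB hz)
      · exact Or.inr rfl
    · rw [Finset.card_union_of_disjoint (by
        simp only [Finset.disjoint_singleton_right, Finset.mem_sdiff, Finset.mem_singleton]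
        exact fun hc => haB_SB hc.1)]
      rw [Finset.sdiff_singleton_eq_erase, Finset.card_erase_of_mem hpB_SB,
        Finset.card_singleton]
      have : 0 < SB.card := Finset.card_pos.mpr hSBne
      omega
    · intro x hx y hy
      simp only [Finset.mem_sdiff, Finset.mem_union, Finset.mem_singleton, not_or,
        not_and] at hx hy
      obtain ⟨hy1, hy2, hy3⟩ := hy
      have hyLB : y ∈ LB := hy1.resolve_right hy3
      rcases eq_or_ne y pB with rfl | hyne
      · rcases hx with ⟨hxSB, hxne⟩ | rfl
        · exact lt_of_le_of_ne (SB.le_max' x hxSB) hxne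
        · exact h2
      · have hySB : y ∉ SB := fun hc => hyne (not_not.mp (hy2 hc))
        have hyT : y ∉ SA ∪ SB := by
          intro hm
          rcases Finset.mem_union.mp hm with hm | hm
          · exact Finset.disjoint_right.mp hdisj hyLB (hSA hm)
          · exact hySB hm
        have hpBy : pB < y := key pB hpB_T y (Finset.mem_union_right _ hyLB) hyT
        rcases hx with ⟨hxSB, _⟩ | rfl
        · exact key x (Finset.mem_union_right _ hxSB) y (Finset.mem_union_right _ hyLB) hyT
        · exact h2.trans hpBy
  -- Claim 3
  have c3 : ((LB ∪ {aB}) \ smallSet SB.card (LB ∪ {aB})).min = (pB : WithTop α) := by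
    rw [c2]
    have hmem : pB ∈ (LB ∪ {aB}) \ ((SB \ {pB}) ∪ {aB}) := by
      simp [hSB hpB_SB, hpB_ne_aB]
    refine le_antisymm (Finset.min_le hmem) (Finset.le_min ?_)
    intro y hy
    simp only [Finset.mem_sdiff, Finset.mem_union, Finset.mem_singleton, not_or,
      Finset.mem_sdiff, not_and] at hy
    obtain ⟨hy1, hy2, hy3⟩ := hy
    have hyLB : y ∈ LB := hy1.resolve_right hy3
    rcases eq_or_ne y pB with rfl | hyne
    · exact le_refl _
    · have hySB : y ∉ SB := fun hc => hyne (not_not.mp (hy2 hc))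
      have hyT : y ∉ SA ∪ SB := by
        intro hm
        rcases Finset.mem_union.mp hm with hm | hm
        · exact Finset.disjoint_right.mp hdisj hyLB (hSA hm)
        · exact hySB hm
      exact_mod_cast (key pB hpB_T y (Finset.mem_union_right _ hyLB) hyT).le
  -- Claim 4
  have c4 : ∀ x ∈ (LA \ {aA}) \ smallSet (SA.card - 1) (LA \ {aA}), pB < x := by
    intro x hx
    rw [c1] at hx
    simp only [Finset.mem_sdiff, Finset.mem_singleton, not_and, not_not] at hx
    obtain ⟨⟨hxLA, hxne⟩, hx2⟩ := hx
    have hxSA : x ∉ SA := fun hc => hxne (hx2 hc)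
    have hxT : x ∉ SA ∪ SB := by
      intro hm
      rcases Finset.mem_union.mp hm with hm | hm
      · exact hxSA hm
      · exact Finset.disjoint_left.mp hdisj hxLA (hSB hm)
    exact key pB hpB_T x (Finset.mem_union_left _ hxLA) hxT
  -- Claim 5 (core form)
  have c5' : smallSet h ((LA \ {aA}) ∪ LB ∪ {aB}) = ((SA ∪ SB) \ {aA}) ∪ {aB} := by
    apply smallSet_eq_of
    · intro z hz
      simp only [Finset.mem_union, Finset.mem_sdiff, Finset.mem_singleton] at hz ⊢
      rcases hz with ⟨hz1 | hz1, hz2⟩ | rfl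
      · exact Or.inl (Or.inl ⟨hSA hz1, hz2⟩)
      · exact Or.inl (Or.inr (hSB hz1))
      · exact Or.inr rfl
    · have haA_T : aA ∈ SA ∪ SB := Finset.mem_union_left _ haA_SA
      have haB_T : aB ∉ (SA ∪ SB) \ {aA} := by
        simp only [Finset.mem_sdiff, Finset.mem_union, Finset.mem_singleton, not_and]
        intro hc
        rcases hc with hc | hc
        · exact absurd hc haB_SA
        · exact absurd hc haB_SB
      rw [Finset.card_union_of_disjoint (Finset.disjoint_singleton_right.mpr haB_T),
        Finset.sdiff_singleton_eq_erase, Finset.card_erase_of_mem haA_T,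
        Finset.card_singleton, hTcard]
      have : 0 < (SA ∪ SB).card := Finset.card_pos.mpr ⟨aA, haA_T⟩
      omega
    · intro x hx y hy
      obtain ⟨hyL, hyS⟩ := Finset.mem_sdiff.mp hy
      have hy3 : y ≠ aB := fun hc =>
        hyS (Finset.mem_union_right _ (Finset.mem_singleton.mpr hc))
      have hyfacts : y ∈ LA ∪ LB ∧ y ≠ aA := by
        rcases Finset.mem_union.mp hyL with h' | h'
        · rcases Finset.mem_union.mp h' with h'' | h''
          · obtain ⟨ha, hb⟩ := Finset.mem_sdiff.mp h''
            exact ⟨Finset.mem_union_left _ ha, by simpa using hb⟩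
          · exact ⟨Finset.mem_union_right _ h'', fun hc => haA_LB (hc ▸ h'')⟩
        · exact absurd (Finset.mem_singleton.mp h') hy3
      have hyT : y ∉ SA ∪ SB := fun hc =>
        hyS (Finset.mem_union_left _ (Finset.mem_sdiff.mpr
          ⟨hc, Finset.notMem_singleton.mpr hyfacts.2⟩))
      rcases Finset.mem_union.mp hx with hx' | hx'
      · exact key x (Finset.mem_sdiff.mp hx').1 y hyfacts.1 hyT
      · rw [Finset.mem_singleton.mp hx']
        exact h2.trans (key pB hpB_T y hyfacts.1 hyT)
  have c5 : smallSet h ((LA \ {aA}) ∪ LB ∪ {aB}) = (smallSet h (LA ∪ LB) \ {aA}) ∪ {aB} := by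
    rw [c5', hinv]
  -- Claim 6
  have c6 : smallSet h ((LA \ {aA}) ∪ LB ∪ {aB}) =
      smallSet (SA.card - 1) (LA \ {aA}) ∪ smallSet SB.card (LB ∪ {aB}) ∪ {pB} := by
    rw [c5', c1, c2]
    ext z
    simp only [Finset.mem_union, Finset.mem_sdiff, Finset.mem_singleton]
    constructor
    · rintro (⟨hz1 | hz1, hz2⟩ | rfl)
      · exact Or.inl (Or.inl ⟨hz1, hz2⟩)
      · rcases eq_or_ne z pB with rfl | hne
        · exact Or.inr rfl
        · exact Or.inl (Or.inr (Or.inl ⟨hz1, hne⟩))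
      · exact Or.inl (Or.inr (Or.inr rfl))
    · rintro ((⟨hz1, hz2⟩ | ⟨hz1, _⟩ | rfl) | rfl)
      · exact Or.inl ⟨Or.inl hz1, hz2⟩
      · exact Or.inl ⟨Or.inr hz1, fun hc => haA_SB (hc ▸ hz1)⟩
      · exact Or.inr rfl
      · exact Or.inl ⟨Or.inr hpB_SB, hpB_ne_aA⟩
  exact ⟨c1, c2, c3, c4, c5, c6⟩
end

section
/- Let α be a linear order, L a finset over α, s a natural number with 0 < s ≤ |L|, and a ∈ L. Then the s−1 smallest elements of L \ {a} are given by: H_{s−1}(L \ {a}) = H_s(L) \ {a} if a ∈ H_s(L), and H_{s−1}(L \ {a}) = H_s(L) \ {max H_s(L)} if a ∉ H_s(L). -/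
private lemma take_erase_of_mem {α : Type*} [DecidableEq α] :
    ∀ (l : List α) (s : ℕ) (a : α), a ∈ l.take s →
      (l.erase a).take (s - 1) = (l.take s).erase a := by
  intro l
  induction l with
  | nil => intro s a h; simp at h
  | cons b t ih =>
      intro s a h
      cases s with
      | zero => simp at h
      | succ n =>
        rw [List.take_succ_cons] at h
        by_cases hab : a = b
        · subst hab
          simp [List.erase_cons_head]
        · have hat : a ∈ t.take n := by
            rcases List.mem_cons.mp h with h1 | h1
            · exact absurd h1 hab
            · exact h1
          have hn : 0 < n := by
            rcases Nat.eq_zero_or_pos n with h0 | h0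
            · subst h0; simp at hat
            · exact h0
          rw [List.erase_cons_tail, List.take_succ_cons,
            List.erase_cons_tail]
          · have : n + 1 - 1 = (n - 1) + 1 := by omega
            rw [this, List.take_succ_cons, ih n a hat]
          · simp [Ne.symm hab]
          · simp [Ne.symm hab]

private lemma toFinset_erase' {α : Type*} [DecidableEq α] (l : List α) (hl : l.Nodup) (a : α) :
    (l.erase a).toFinset = l.toFinset.erase a := by
  ext x
  simp [hl.mem_erase_iff, Finset.mem_erase, and_comm]

/-- For a finset `L`, `0 < s ≤ |L|`, and `a ∈ L`, the `s-1` smallest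
elements of `L \ {a}` are: `H_{s-1}(L \ {a}) = H_s(L) \ {a}` if `a ∈ H_s(L)`, and
`H_{s-1}(L \ {a}) = H_s(L) \ {max H_s(L)}` if `a ∉ H_s(L)`. -/
theorem small_set_after_delete {α : Type*} [LinearOrder α] (L : Finset α) (s : ℕ)
    (hs0 : 0 < s) (hs : s ≤ L.card) (a : α) (ha : a ∈ L) :
    (a ∈ smallSet s L → smallSet (s - 1) (L \ {a}) = smallSet s L \ {a}) ∧
    (a ∉ smallSet s L → ∀ hne : (smallSet s L).Nonempty,
      smallSet (s - 1) (L \ {a}) = smallSet s L \ {(smallSet s L).max' hne}) := by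
  classical
  set l := L.sort (· ≤ ·) with hl
  have hnd : l.Nodup := L.sort_nodup _
  have hsorted : l.Pairwise (· ≤ ·) := L.pairwise_sort _
  have hlt : l.Pairwise (· < ·) := List.sortedLT_iff_pairwise.mp L.sortedLT_sort
  have hlen : l.length = L.card := L.length_sort _
  have hal : a ∈ l := (Finset.mem_sort _).mpr ha
  have hLa : L \ {a} = L.erase a := by
    rw [Finset.sdiff_singleton_eq_erase]
  have hsd : (L \ {a}).sort (· ≤ ·) = l.erase a := by
    rw [hLa]
    have h1 : (l.erase a).toFinset = L.erase a := by
      rw [toFinset_erase' l hnd a, Finset.sort_toFinset]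
    have h2 : (l.erase a).Pairwise (· ≤ ·) := hsorted.sublist (l.erase_sublist (a := a))
    have h3 : (l.erase a).Nodup := hnd.erase a
    rw [← h1]
    exact (List.toFinset_sort _ h3).mpr h2
  constructor
  · intro hmem
    have hat : a ∈ l.take s := List.mem_toFinset.mp hmem
    have key := take_erase_of_mem l s a hat
    unfold smallSet
    rw [hsd, key, toFinset_erase' _ (hnd.sublist (l.take_sublist s)) a,
      Finset.sdiff_singleton_eq_erase]
  · intro hmem hne
    have hat : a ∉ l.take s := fun h => hmem (List.mem_toFinset.mpr h)
    have hslen : s ≤ l.length := by omega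
    -- g : last element of take s l
    have hlt' : s - 1 < l.length := by omega
    set g := l.get ⟨s - 1, hlt'⟩ with hg
    have htake : l.take s = l.take (s - 1) ++ [g] := by
      have : s = (s - 1) + 1 := by omega
      rw [this, List.take_succ]
      congr 1
      rw [List.getElem?_eq_getElem (by omega)]
      simp [hg]
    -- erase a doesn't touch first s elements
    have hatake : a ∉ l.take s := hat
    have hsplit : l.erase a = l.take s ++ (l.drop s).erase a := by
      conv_lhs => rw [← List.take_append_drop s l]
      rw [List.erase_append_right _ hatake]
    have hLHS : (l.erase a).take (s - 1) = l.take (s - 1) := by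
      rw [hsplit, List.take_append_of_le_length (by simp [List.length_take]; omega),
        List.take_take, Nat.min_eq_left (by omega)]
    -- max' = g
    have hg_mem : g ∈ l.take s := by rw [htake]; simp
    have hmax : (smallSet s L).max' hne = g := by
      apply le_antisymm
      · apply Finset.max'_le
        intro y hy
        have hy' : y ∈ l.take s := List.mem_toFinset.mp hy
        rw [htake] at hy'
        rcases List.mem_append.mp hy' with h1 | h1
        · -- y in take (s-1), sorted le
          have : l.Pairwise (· ≤ ·) := hsorted
          rcases List.mem_iff_get.mp ((l.take_sublist (s-1)).mem h1) with ⟨j, hj⟩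
          -- need index of y less than s-1
          rcases List.mem_iff_get.mp h1 with ⟨k, hk⟩
          have hk' : (k : ℕ) < s - 1 := by
            have := k.2
            simp [List.length_take] at this
            omega
          have hky : l.get ⟨k, by omega⟩ = y := by
            rw [← hk]; simp
          rw [← hky, hg]
          exact hsorted.rel_get_of_le (by simp; omega)
        · simp at h1; subst h1; exact le_refl _
      · exact Finset.le_max' _ _ (List.mem_toFinset.mpr hg_mem)
    rw [hmax]
    unfold smallSet
    rw [hsd, hLHS]
    have hg_not : g ∉ l.take (s - 1) := by
      intro hgin
      have hndtake : (l.take s).Nodup := hnd.sublist (l.take_sublist s)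
      rw [htake] at hndtake
      have := List.disjoint_of_nodup_append hndtake
      exact this hgin (by simp)
    ext x
    simp only [← hl, List.mem_toFinset, Finset.mem_sdiff, Finset.mem_singleton, htake,
      List.mem_append, List.mem_singleton]
    constructor
    · intro hx
      refine ⟨Or.inl hx, ?_⟩
      intro h; subst h; exact hg_not hx
    · rintro ⟨h1 | h1, h2⟩
      · exact h1
      · exact absurd h1 h2
end
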